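/- Let 𝒰 ⊆ 2^[m] be any structure class containing at least one set U with FDPhatSBH(U) ≤ q. If the null p-values are superuniform and the p-value vector p is PRDS on the subset H0, then the Structured BH procedure at level q controls the FDR: E[ |U* ∩ H0| / |U*| ] ≤ q (with 0/0 = 0), for any measurable choice U* of a maximal-cardinality member of {U ∈ 𝒰 : FDPhatSBH(U) ≤ q}. -/

import Mathlib

open MeasureTheory Finset

/-- The Structured BH FDP estimate `m · (max_{j ∈ U} p_j) / |U|`, with the convention that
the estimate is `0` for `U = ∅` (note `sSup ∅ = 0` in `ℝ` and `0/0 = 0`). -/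
noncomputable def FDPhatSBH {m : ℕ} (U : Finset (Fin m)) (p : Fin m → ℝ) : ℝ :=
  (m : ℝ) * sSup (p '' (U : Set (Fin m))) / (U.card : ℝ)

/-- Null p-values are superuniform. -/
def Superuniform {Ω : Type*} [MeasurableSpace Ω] (μ : Measure Ω) {m : ℕ}
    (p : Ω → Fin m → ℝ) (H0 : Finset (Fin m)) : Prop :=
  ∀ j ∈ H0, ∀ t ∈ Set.Icc (0 : ℝ) 1, μ {ω | p ω j ≤ t} ≤ ENNReal.ofReal t

/-- The p-value vector is PRDS on the subset `H0`. -/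
def PRDSOn {Ω : Type*} [MeasurableSpace Ω] (μ : Measure Ω) {m : ℕ}
    (p : Ω → Fin m → ℝ) (H0 : Finset (Fin m)) : Prop :=
  ∀ j ∈ H0, ∀ D : Set (Fin m → ℝ), MeasurableSet D →
    (∀ x ∈ D, ∀ y : Fin m → ℝ, (∀ i, x i ≤ y i) → y ∈ D) →
    ∀ t1 t2 : ℝ, t1 ≤ t2 → 0 < μ {ω | p ω j ≤ t1} →
      μ ({ω | p ω ∈ D} ∩ {ω | p ω j ≤ t1}) / μ {ω | p ω j ≤ t1} ≤
        μ ({ω | p ω ∈ D} ∩ {ω | p ω j ≤ t2}) / μ {ω | p ω j ≤ t2}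

lemma le_sSup_image {m : ℕ} {U : Finset (Fin m)} {x : Fin m → ℝ} {j : Fin m} (hj : j ∈ U) :
    x j ≤ sSup (x '' (U : Set (Fin m))) :=
  le_csSup (U.finite_toSet.image x).bddAbove ⟨j, by simpa using hj, rfl⟩

lemma FDPhat_mono {m : ℕ} (U : Finset (Fin m)) {x y : Fin m → ℝ} (h : ∀ i, x i ≤ y i) :
    FDPhatSBH U x ≤ FDPhatSBH U y := by
  rcases U.eq_empty_or_nonempty with rfl | hU
  · simp [FDPhatSBH]
  · have hsup : sSup (x '' (U : Set (Fin m))) ≤ sSup (y '' (U : Set (Fin m))) := by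
      apply csSup_le (by simpa using hU.to_set.image x)
      rintro a ⟨i, hi, rfl⟩
      exact (h i).trans (le_sSup_image (by simpa using hi))
    have hc : (0:ℝ) ≤ U.card := by positivity
    unfold FDPhatSBH
    exact div_le_div_of_nonneg_right (mul_le_mul_of_nonneg_left hsup (by positivity)) hc

lemma FDPhat_measurable {m : ℕ} (U : Finset (Fin m)) :
    Measurable (fun x : Fin m → ℝ => FDPhatSBH U x) := by
  rcases U.eq_empty_or_nonempty with rfl | hU
  · simp only [FDPhatSBH]
    simp [Real.sSup_empty]
  · have h1 : Measurable (fun x : Fin m → ℝ => sSup (x '' (U : Set (Fin m)))) := by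
      have : (fun x : Fin m → ℝ => sSup (x '' (U : Set (Fin m)))) =
          fun x => U.sup' hU x := by
        funext x
        rw [Finset.sup'_eq_csSup_image]
      rw [this]
      have h2 := Finset.measurable_sup' (f := fun (i : Fin m) (x : Fin m → ℝ) => x i) hU
        (fun i _ => measurable_pi_apply i)
      have h3 : (U.sup' hU (fun (i : Fin m) (x : Fin m → ℝ) => x i)) =
          fun x => U.sup' hU x := by
        funext x
        rw [Finset.sup'_apply]
      rwa [h3] at h2
    unfold FDPhatSBH
    exact ((measurable_const.mul h1).div_const _)

open scoped Classical in
/-- the size of the largest feasible set -/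
noncomputable def SBHsize {m : ℕ} (𝒰 : Set (Finset (Fin m))) (q : ℝ) (x : Fin m → ℝ) : ℕ :=
  Finset.sup (Finset.univ.filter (fun U => U ∈ 𝒰 ∧ FDPhatSBH U x ≤ q)) Finset.card

lemma SBHsize_le_iff {m : ℕ} (𝒰 : Set (Finset (Fin m))) (q : ℝ) (x : Fin m → ℝ) (k : ℕ) :
    SBHsize 𝒰 q x ≤ k ↔ ∀ U : Finset (Fin m), U ∈ 𝒰 → FDPhatSBH U x ≤ q → U.card ≤ k := by
  classical
  unfold SBHsize
  rw [Finset.sup_le_iff]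
  constructor
  · intro h U hU hq
    exact h U (by simp [hU, hq])
  · intro h U hU
    simp only [Finset.mem_filter] at hU
    exact h U hU.2.1 hU.2.2

lemma SBHsize_anti {m : ℕ} (𝒰 : Set (Finset (Fin m))) (q : ℝ) {x y : Fin m → ℝ}
    (h : ∀ i, x i ≤ y i) : SBHsize 𝒰 q y ≤ SBHsize 𝒰 q x := by
  rw [SBHsize_le_iff]
  intro U hU hq
  classical
  have : FDPhatSBH U x ≤ q := (FDPhat_mono U h).trans hq
  exact Finset.le_sup (f := Finset.card) (by simp [SBHsize, hU, this] : U ∈ _)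

lemma SBHsize_level_mono {m : ℕ} (𝒰 : Set (Finset (Fin m))) (q : ℝ) (k : ℕ) :
    ∀ x ∈ {x : Fin m → ℝ | SBHsize 𝒰 q x ≤ k}, ∀ y : Fin m → ℝ, (∀ i, x i ≤ y i) →
      y ∈ {x : Fin m → ℝ | SBHsize 𝒰 q x ≤ k} := by
  intro x hx y hxy
  exact le_trans (SBHsize_anti 𝒰 q hxy) hx

lemma SBHsize_level_measurable {m : ℕ} (𝒰 : Set (Finset (Fin m))) (q : ℝ) (k : ℕ) :
    MeasurableSet {x : Fin m → ℝ | SBHsize 𝒰 q x ≤ k} := by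
  have : {x : Fin m → ℝ | SBHsize 𝒰 q x ≤ k} =
      ⋂ U : Finset (Fin m), {x | U ∈ 𝒰 → FDPhatSBH U x ≤ q → U.card ≤ k} := by
    ext x
    simp only [Set.mem_setOf_eq, Set.mem_iInter, SBHsize_le_iff]
  rw [this]
  refine MeasurableSet.iInter fun U => ?_
  by_cases h1 : U ∈ 𝒰
  · by_cases h2 : U.card ≤ k
    · simp only [h2, imp_true_iff]
      exact MeasurableSet.univ
    · have : {x : Fin m → ℝ | U ∈ 𝒰 → FDPhatSBH U x ≤ q → U.card ≤ k} =
          {x | q < FDPhatSBH U x} := by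
        ext x; simp [h1, h2, not_le, imp_iff_not_or]
      rw [this]
      exact measurableSet_lt measurable_const (FDPhat_measurable U)
  · simp only [h1, false_implies]
    exact MeasurableSet.univ

/-- Key super-uniformity/PRDS lemma: telescoping bound. -/
lemma prds_key {Ω : Type*} [MeasurableSpace Ω] (μ : Measure Ω) [IsProbabilityMeasure μ]
    {m : ℕ} (p : Ω → Fin m → ℝ) (hpmeas : Measurable p) (j : Fin m)
    {c : ℝ} (hc : 0 ≤ c) (hcm : c * m ≤ 1)
    (hsup : ∀ t ∈ Set.Icc (0:ℝ) 1, μ {ω | p ω j ≤ t} ≤ ENNReal.ofReal t)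
    (hprds : ∀ D : Set (Fin m → ℝ), MeasurableSet D →
      (∀ x ∈ D, ∀ y : Fin m → ℝ, (∀ i, x i ≤ y i) → y ∈ D) →
      ∀ t1 t2 : ℝ, t1 ≤ t2 → 0 < μ {ω | p ω j ≤ t1} →
        μ ({ω | p ω ∈ D} ∩ {ω | p ω j ≤ t1}) / μ {ω | p ω j ≤ t1} ≤
          μ ({ω | p ω ∈ D} ∩ {ω | p ω j ≤ t2}) / μ {ω | p ω j ≤ t2})
    (D : ℕ → Set (Fin m → ℝ)) (hDmeas : ∀ k, MeasurableSet (D k))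
    (hDmono : ∀ k, ∀ x ∈ D k, ∀ y : Fin m → ℝ, (∀ i, x i ≤ y i) → y ∈ D k)
    (hDsub : ∀ k, D k ⊆ D (k + 1)) :
    ∑ k ∈ Finset.range m, (1 / ((k : ℝ) + 1)) *
      (μ ((p ⁻¹' D (k+1) \ p ⁻¹' D k) ∩ {ω | p ω j ≤ c * ((k : ℝ) + 1)})).toReal ≤ c := by
  classical
  set F : ℕ → ENNReal := fun k => μ {ω | p ω j ≤ c * (k : ℝ)} with hF
  set G : ℕ → ENNReal := fun k => μ (p ⁻¹' D k ∩ {ω | p ω j ≤ c * (k : ℝ)}) with hG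
  have hSmeas : ∀ t : ℝ, MeasurableSet {ω | p ω j ≤ t} := fun t =>
    measurableSet_le ((measurable_pi_apply j).comp hpmeas) measurable_const
  have hFmono : ∀ k, F k ≤ F (k + 1) := by
    intro k
    apply measure_mono
    intro ω hω
    simp only [Set.mem_setOf_eq] at *
    refine le_trans hω ?_
    push_cast
    nlinarith
  have hGF : ∀ k, G k ≤ F k := fun k => measure_mono Set.inter_subset_right
  have hFfin : ∀ k, F k ≠ ⊤ := fun k => measure_ne_top μ _
  have hGfin : ∀ k, G k ≠ ⊤ := fun k => measure_ne_top μ _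
  set r : ℕ → ℝ := fun k => if F k = 0 then 0 else (G k).toReal / (F k).toReal with hr
  have hr_nonneg : ∀ k, 0 ≤ r k := by
    intro k
    simp only [hr]
    split
    · exact le_refl 0
    · positivity
  have hr_le_one : ∀ k, r k ≤ 1 := by
    intro k
    simp only [hr]
    split
    · norm_num
    · rename_i h
      rw [div_le_one (by
        have := ENNReal.toReal_pos h (hFfin k); linarith)]
      exact ENNReal.toReal_mono (hFfin k) (hGF k)
  -- PRDS in real form
  have hprds_real : ∀ k, F k ≠ 0 →
      (G k).toReal / (F k).toReal ≤
        (μ (p ⁻¹' D k ∩ {ω | p ω j ≤ c * ((k : ℝ) + 1)})).toReal / (F (k+1)).toReal := by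
    intro k hFk
    have ht : c * (k : ℝ) ≤ c * ((k : ℝ) + 1) := by nlinarith
    have h := hprds (D k) (hDmeas k) (hDmono k) (c * k) (c * ((k : ℝ)+1)) ht
      (pos_iff_ne_zero.mpr hFk)
    have hcast : ((k+1 : ℕ) : ℝ) = (k:ℝ) + 1 := by push_cast; ring
    have hF1 : F (k+1) ≠ 0 := fun h0 => hFk (le_antisymm (le_trans (hFmono k) h0.le) zero_le)
    have hF1' : μ {ω | p ω j ≤ c * ((k : ℝ) + 1)} ≠ 0 := by
      simpa [hF, hcast] using hF1
    have hne : μ ({ω | p ω ∈ D k} ∩ {ω | p ω j ≤ c * ((k : ℝ) + 1)}) /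
        μ {ω | p ω j ≤ c * ((k : ℝ) + 1)} ≠ ⊤ :=
      (ENNReal.div_lt_top (measure_ne_top μ _) hF1').ne
    have h2 := ENNReal.toReal_mono hne h
    rw [ENNReal.toReal_div, ENNReal.toReal_div] at h2
    simp only [hF, hG, hcast]
    exact h2
  have hcast : ∀ k : ℕ, ((k+1 : ℕ) : ℝ) = (k:ℝ) + 1 := by intro k; push_cast; ring
  have hF1of : ∀ k, F k = 0 → r k = 0 := by
    intro k hk
    simp only [hr, hk, if_pos]
  have hGr : ∀ k, F k ≠ 0 → (G k).toReal = r k * (F k).toReal := by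
    intro k hk
    have : (F k).toReal ≠ 0 := by
      have := ENNReal.toReal_pos hk (hFfin k); linarith
    simp only [hr, if_neg hk]
    field_simp
  have hr_mono : ∀ k, r k ≤ r (k + 1) := by
    intro k
    by_cases hFk : F k = 0
    · rw [hF1of k hFk]; exact hr_nonneg (k+1)
    · have hF1 : F (k+1) ≠ 0 := fun h0 => hFk (le_antisymm (le_trans (hFmono k) h0.le) zero_le)
      simp only [hr, if_neg hFk, if_neg hF1]
      refine (hprds_real k hFk).trans ?_
      have hnum : (μ (p ⁻¹' D k ∩ {ω | p ω j ≤ c * ((k:ℝ)+1)})).toReal ≤ (G (k+1)).toReal := by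
        refine ENNReal.toReal_mono (hGfin _) (measure_mono ?_)
        rintro ω ⟨h1, h2⟩
        refine ⟨hDsub k h1, ?_⟩
        simpa [hcast k] using h2
      have hFpos : 0 < (F (k+1)).toReal := ENNReal.toReal_pos hF1 (hFfin _)
      rw [hG, hF] at *
      simp only [hcast k] at *
      exact div_le_div_of_nonneg_right hnum hFpos.le
  -- per-term bound
  have key : ∀ k ∈ Finset.range m, (1 / ((k : ℝ) + 1)) *
      (μ ((p ⁻¹' D (k+1) \ p ⁻¹' D k) ∩ {ω | p ω j ≤ c * ((k : ℝ) + 1)})).toReal ≤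
      c * (r (k+1) - r k) := by
    intro k hk
    rw [Finset.mem_range] at hk
    set S : Set Ω := {ω | p ω j ≤ c * ((k : ℝ) + 1)} with hS
    set H : ENNReal := μ (p ⁻¹' D k ∩ S) with hH
    have hHfin : H ≠ ⊤ := measure_ne_top μ _
    have hG1 : G (k+1) = μ (p ⁻¹' D (k+1) ∩ S) := by
      simp only [hG, hS, hcast k]
    have hsetsplit : (p ⁻¹' D (k+1) \ p ⁻¹' D k) ∩ S =
        (p ⁻¹' D (k+1) ∩ S) \ (p ⁻¹' D k ∩ S) := by
      ext ω
      simp only [Set.mem_inter_iff, Set.mem_diff, Set.mem_preimage]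
      tauto
    have hsub2 : (p ⁻¹' D k ∩ S) ⊆ (p ⁻¹' D (k+1) ∩ S) :=
      Set.inter_subset_inter_left S (Set.preimage_mono (hDsub k))
    have hA : (μ ((p ⁻¹' D (k+1) \ p ⁻¹' D k) ∩ S)).toReal =
        (G (k+1)).toReal - H.toReal := by
      rw [hsetsplit, measure_diff hsub2
        ((hpmeas (hDmeas k)).inter (hSmeas _)).nullMeasurableSet hHfin, hG1,
        ENNReal.toReal_sub_of_le (measure_mono hsub2) (measure_ne_top μ _)]
    have hHG : H ≤ μ (p ⁻¹' D (k+1) ∩ S) := measure_mono hsub2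
    by_cases hF1 : F (k+1) = 0
    · have hG10 : G (k+1) = 0 :=
        le_antisymm (le_trans (hGF (k+1)) hF1.le) zero_le
      have hH0 : H = 0 := le_antisymm (by rw [← hG10, hG1]; exact hHG) zero_le
      have hFk0 : F k = 0 := le_antisymm (le_trans (hFmono k) hF1.le) zero_le
      rw [hA, hG10, hH0, hF1of _ hF1, hF1of _ hFk0]
      simp
    · have hFpos : 0 < (F (k+1)).toReal := ENNReal.toReal_pos hF1 (hFfin _)
      have hHb : r k * (F (k+1)).toReal ≤ H.toReal := by
        by_cases hFk : F k = 0
        · rw [hF1of _ hFk, zero_mul]; positivity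
        · have h3 := hprds_real k hFk
          have h4 : r k ≤ H.toReal / (F (k+1)).toReal := by
            simp only [hr, if_neg hFk]
            exact h3
          exact (le_div_iff₀ hFpos).mp h4
      have hGr1 : (G (k+1)).toReal = r (k+1) * (F (k+1)).toReal := hGr _ hF1
      have hFt : (F (k+1)).toReal ≤ c * ((k : ℝ) + 1) := by
        have hmem : c * ((k : ℝ) + 1) ∈ Set.Icc (0:ℝ) 1 := by
          constructor
          · positivity
          · have : (k : ℝ) + 1 ≤ m := by
              have : (k : ℕ) + 1 ≤ m := hk
              exact_mod_cast this
            nlinarith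
        have := hsup _ hmem
        have h5 : F (k+1) ≤ ENNReal.ofReal (c * ((k : ℝ) + 1)) := by
          simp only [hF, hcast k]
          exact this
        exact ENNReal.toReal_le_of_le_ofReal hmem.1 h5
      have hd : 0 ≤ r (k+1) - r k := by linarith [hr_mono k]
      have hk1 : (0:ℝ) < (k:ℝ) + 1 := by positivity
      rw [hA, hGr1]
      have step1 : (G (k+1)).toReal - H.toReal ≤ (F (k+1)).toReal * (r (k+1) - r k) := by
        rw [hGr1]; nlinarith
      rw [hGr1] at step1
      have step2 : (F (k+1)).toReal * (r (k+1) - r k) ≤ (c * ((k:ℝ)+1)) * (r (k+1) - r k) :=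
        mul_le_mul_of_nonneg_right hFt hd
      rw [one_div, inv_mul_le_iff₀ hk1]
      calc r (k+1) * (F (k+1)).toReal - H.toReal
          ≤ (c * ((k:ℝ)+1)) * (r (k+1) - r k) := le_trans step1 step2
        _ = ((k:ℝ)+1) * (c * (r (k+1) - r k)) := by ring
  calc ∑ k ∈ Finset.range m, (1 / ((k : ℝ) + 1)) *
        (μ ((p ⁻¹' D (k+1) \ p ⁻¹' D k) ∩ {ω | p ω j ≤ c * ((k : ℝ) + 1)})).toReal
      ≤ ∑ k ∈ Finset.range m, c * (r (k+1) - r k) := Finset.sum_le_sum key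
    _ = c * (r m - r 0) := by rw [← Finset.mul_sum, Finset.sum_range_sub]
    _ ≤ c * 1 := mul_le_mul_of_nonneg_left (by linarith [hr_le_one m, hr_nonneg 0]) hc
    _ = c := mul_one c

/-- **Structured BH controls the FDR under PRDS (Proposition C.1).**
Let `𝒰` be any structure class containing (almost surely) at least one set `U` with
`FDPhatSBH(U) ≤ q`. If the null p-values are superuniform and the p-value vector is PRDS on
`H0`, then for any measurable choice `U*` of a maximal-cardinality member of
`{U ∈ 𝒰 : FDPhatSBH(U) ≤ q}`, Structured BH controls the FDR:
`E[|U* ∩ H0| / |U*|] ≤ q` (with `0/0 = 0`). -/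
theorem structuredBH_FDR_control
    {Ω : Type*} [MeasurableSpace Ω] (μ : Measure Ω) [IsProbabilityMeasure μ]
    {m : ℕ} (H0 : Finset (Fin m)) (p : Ω → Fin m → ℝ)
    (hpmeas : Measurable p)
    (hp01 : ∀ ω i, p ω i ∈ Set.Icc (0 : ℝ) 1)
    (hsuper : Superuniform μ p H0)
    (hPRDS : PRDSOn μ p H0)
    (𝒰 : Set (Finset (Fin m)))
    (q : ℝ) (hq : q ∈ Set.Ioo (0 : ℝ) 1)
    (hexists : ∀ ω, ∃ U ∈ 𝒰, FDPhatSBH U (p ω) ≤ q)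
    (Ustar : Ω → Finset (Fin m))
    (hUmeas : ∀ S : Finset (Fin m), MeasurableSet {ω | Ustar ω = S})
    (hUmem : ∀ ω, Ustar ω ∈ 𝒰)
    (hUfdp : ∀ ω, FDPhatSBH (Ustar ω) (p ω) ≤ q)
    (hUmax : ∀ ω, ∀ U ∈ 𝒰, FDPhatSBH U (p ω) ≤ q → U.card ≤ (Ustar ω).card) :
    ∫ ω, ((Ustar ω ∩ H0).card : ℝ) / ((Ustar ω).card : ℝ) ∂μ ≤ q := by
  classical
  obtain ⟨hq0, hq1⟩ := hq
  rcases Nat.eq_zero_or_pos m with hm | hm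
  · subst hm
    have hU0 : ∀ ω, Ustar ω = (∅ : Finset (Fin 0)) :=
      fun ω => Finset.eq_empty_of_forall_notMem fun j _ => j.elim0
    have : ∀ ω, ((Ustar ω ∩ H0).card : ℝ) / ((Ustar ω).card : ℝ) = 0 := by
      intro ω; simp [hU0 ω]
    simp only [this, integral_zero]
    linarith
  -- main case
  have hm0 : (0:ℝ) < m := by exact_mod_cast hm
  set c : ℝ := q / m with hcdef
  have hc : 0 ≤ c := by positivity
  have hcm : c * m ≤ 1 := by
    rw [hcdef, div_mul_cancel₀ _ (ne_of_gt hm0)]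
    linarith
  set w : Finset (Fin m) → ℝ := fun S => (μ {ω | Ustar ω = S}).toReal with hw
  have hwnn : ∀ S, 0 ≤ w S := fun S => ENNReal.toReal_nonneg
  -- Step A : the integral as a finite sum
  have hint : ∫ ω, ((Ustar ω ∩ H0).card : ℝ) / ((Ustar ω).card : ℝ) ∂μ
      = ∑ S : Finset (Fin m), (((S ∩ H0).card : ℝ) / (S.card : ℝ)) * w S := by
    have heq : (fun ω => ((Ustar ω ∩ H0).card : ℝ) / ((Ustar ω).card : ℝ)) =
        fun ω => ∑ S : Finset (Fin m), Set.indicator {ω' | Ustar ω' = S}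
          (fun _ => ((S ∩ H0).card : ℝ) / (S.card : ℝ)) ω := by
      funext ω
      rw [Finset.sum_eq_single (Ustar ω)]
      · simp [Set.indicator_apply]
      · intro S _ hS
        have : ¬ Ustar ω = S := fun h => hS h.symm
        simp [Set.indicator_apply, this]
      · simp
    rw [heq, integral_finset_sum]
    · refine Finset.sum_congr rfl fun S _ => ?_
      rw [integral_indicator_const _ (hUmeas S)]
      simp [hw, mul_comm, Measure.real]
    · exact fun S _ => (integrable_const _).indicator (hUmeas S)
  -- Step B : FDP as a sum over null hypotheses
  have hFS : ∀ S : Finset (Fin m), ((S ∩ H0).card : ℝ) / (S.card : ℝ) =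
      ∑ j ∈ H0, (if j ∈ S then (1:ℝ) / (S.card : ℝ) else 0) := by
    intro S
    rw [← Finset.sum_filter, Finset.filter_mem_eq_inter, Finset.sum_const,
      Finset.inter_comm, nsmul_eq_mul]
    ring
  -- the size function
  set D : ℕ → Set (Fin m → ℝ) := fun k => {x | SBHsize 𝒰 q x ≤ k} with hD
  have hgU : ∀ ω, SBHsize 𝒰 q (p ω) = (Ustar ω).card := by
    intro ω
    apply le_antisymm
    · rw [SBHsize_le_iff]
      exact fun U hU hq' => hUmax ω U hU hq'
    · exact Finset.le_sup (f := Finset.card)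
        (by simp [Finset.mem_filter, hUmem ω, hUfdp ω])
  -- Step C : per-null bound
  have hTj : ∀ j ∈ H0,
      (∑ S : Finset (Fin m), (if j ∈ S then (1:ℝ) / (S.card : ℝ) else 0) * w S) ≤ c := by
    intro j hj
    have hfib : ∑ S : Finset (Fin m), (if j ∈ S then (1:ℝ) / (S.card : ℝ) else 0) * w S
        = ∑ k ∈ Finset.range (m+1), ∑ S ∈ Finset.univ.filter
            (fun S : Finset (Fin m) => S.card = k),
            (if j ∈ S then (1:ℝ) / (S.card : ℝ) else 0) * w S := by
      refine (Finset.sum_fiberwise_of_maps_to (fun S _ => Finset.mem_range.mpr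
        (Nat.lt_succ_of_le ?_)) _).symm
      calc S.card ≤ (Finset.univ : Finset (Fin m)).card := Finset.card_le_univ S
        _ = m := by simp
    rw [hfib, Finset.sum_range_succ']
    have hzero : ∑ S ∈ Finset.univ.filter (fun S : Finset (Fin m) => S.card = 0),
        (if j ∈ S then (1:ℝ) / (S.card : ℝ) else 0) * w S = 0 := by
      refine Finset.sum_eq_zero fun S hS => ?_
      rw [Finset.mem_filter] at hS
      have : S = ∅ := Finset.card_eq_zero.mp hS.2
      simp [this]
    rw [hzero, add_zero]
    have hinner : ∀ i ∈ Finset.range m,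
        ∑ S ∈ Finset.univ.filter (fun S : Finset (Fin m) => S.card = i + 1),
          (if j ∈ S then (1:ℝ) / (S.card : ℝ) else 0) * w S ≤
        (1 / ((i : ℝ) + 1)) *
          (μ ((p ⁻¹' D (i+1) \ p ⁻¹' D i) ∩ {ω | p ω j ≤ c * ((i : ℝ) + 1)})).toReal := by
      intro i _
      set A := Finset.univ.filter (fun S : Finset (Fin m) => S.card = i + 1) with hA
      set A' := A.filter (fun S => j ∈ S) with hA'
      have step1a : ∀ S ∈ A, (if j ∈ S then (1:ℝ) / (S.card : ℝ) else 0) * w S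
          = if j ∈ S then (1 / ((i : ℝ) + 1)) * w S else 0 := by
        intro S hS
        rw [hA, Finset.mem_filter] at hS
        by_cases hjS : j ∈ S
        · rw [if_pos hjS, if_pos hjS, hS.2]
          push_cast
          ring
        · rw [if_neg hjS, if_neg hjS, zero_mul]
      have step1 : ∑ S ∈ A, (if j ∈ S then (1:ℝ) / (S.card : ℝ) else 0) * w S
          = ∑ S ∈ A', (1 / ((i : ℝ) + 1)) * w S := by
        rw [Finset.sum_congr rfl step1a, hA']
        exact (Finset.sum_filter _ _).symm
      rw [step1, ← Finset.mul_sum]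
      have hwsum : ∑ S ∈ A', w S =
          (μ (⋃ S ∈ A', {ω | Ustar ω = S})).toReal := by
        rw [measure_biUnion_finset ?_ (fun S _ => hUmeas S)]
        · rw [ENNReal.toReal_sum (fun S _ => measure_ne_top μ _)]
        · intro S hS T hT hST
          simp only [Function.onFun]
          apply Set.disjoint_left.mpr
          intro ω h1 h2
          exact hST (h1.symm.trans h2)
      have hsubset : (⋃ S ∈ A', {ω | Ustar ω = S}) ⊆
          (p ⁻¹' D (i+1) \ p ⁻¹' D i) ∩ {ω | p ω j ≤ c * ((i : ℝ) + 1)} := by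
        intro ω hω
        simp only [Set.mem_iUnion, Set.mem_setOf_eq] at hω
        obtain ⟨S, hS, hUS⟩ := hω
        rw [hA', Finset.mem_filter, hA, Finset.mem_filter] at hS
        obtain ⟨⟨_, hcard⟩, hjS⟩ := hS
        have hcardU : (Ustar ω).card = i + 1 := by rw [hUS]; exact hcard
        have hgω : SBHsize 𝒰 q (p ω) = i + 1 := by rw [hgU ω, hcardU]
        constructor
        · constructor
          · show SBHsize 𝒰 q (p ω) ≤ i + 1
            exact hgω.le
          · show ¬ SBHsize 𝒰 q (p ω) ≤ i
            rw [hgω]; omega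
        · -- p ω j ≤ c * (i+1)
          show p ω j ≤ c * ((i : ℝ) + 1)
          have hfdp := hUfdp ω
          rw [FDPhatSBH, hcardU] at hfdp
          have hi1 : (0:ℝ) < (i:ℝ) + 1 := by positivity
          have h1 : (m:ℝ) * sSup (p ω '' ((Ustar ω) : Set (Fin m))) ≤ q * ((i:ℝ)+1) := by
            rw [div_le_iff₀ (by exact_mod_cast hi1)] at hfdp
            push_cast at hfdp ⊢
            linarith
          have h2 : p ω j ≤ sSup (p ω '' ((Ustar ω) : Set (Fin m))) :=
            le_sSup_image (by rw [hUS]; exact hjS)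
          rw [hcdef]
          rw [div_mul_eq_mul_div, le_div_iff₀ hm0]
          nlinarith
      have hble : (μ (⋃ S ∈ A', {ω | Ustar ω = S})).toReal ≤
          (μ ((p ⁻¹' D (i+1) \ p ⁻¹' D i) ∩ {ω | p ω j ≤ c * ((i : ℝ) + 1)})).toReal :=
        ENNReal.toReal_mono (measure_ne_top μ _) (measure_mono hsubset)
      rw [hwsum]
      have : (0:ℝ) ≤ 1 / ((i:ℝ)+1) := by positivity
      exact mul_le_mul_of_nonneg_left hble this
    calc ∑ i ∈ Finset.range m, ∑ S ∈ Finset.univ.filter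
          (fun S : Finset (Fin m) => S.card = i + 1),
          (if j ∈ S then (1:ℝ) / (S.card : ℝ) else 0) * w S
        ≤ ∑ i ∈ Finset.range m, (1 / ((i : ℝ) + 1)) *
          (μ ((p ⁻¹' D (i+1) \ p ⁻¹' D i) ∩ {ω | p ω j ≤ c * ((i : ℝ) + 1)})).toReal :=
          Finset.sum_le_sum hinner
      _ ≤ c := prds_key μ p hpmeas j hc hcm (hsuper j hj) (hPRDS j hj) D
          (fun k => SBHsize_level_measurable 𝒰 q k)
          (fun k => SBHsize_level_mono 𝒰 q k)
          (fun k x hx => le_trans hx (Nat.le_succ k))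
  -- put everything together
  rw [hint]
  have hswap : ∑ S : Finset (Fin m), (((S ∩ H0).card : ℝ) / (S.card : ℝ)) * w S
      = ∑ j ∈ H0, ∑ S : Finset (Fin m),
          (if j ∈ S then (1:ℝ) / (S.card : ℝ) else 0) * w S := by
    simp_rw [hFS, Finset.sum_mul]
    rw [Finset.sum_comm]
  rw [hswap]
  have hH0card : (H0.card : ℝ) ≤ m := by
    calc (H0.card : ℝ) ≤ ((Finset.univ : Finset (Fin m)).card : ℝ) := by
          exact_mod_cast Finset.card_le_univ H0
      _ = m := by simp
  calc ∑ j ∈ H0, ∑ S : Finset (Fin m),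
        (if j ∈ S then (1:ℝ) / (S.card : ℝ) else 0) * w S
      ≤ ∑ j ∈ H0, c := Finset.sum_le_sum hTj
    _ = H0.card * c := by rw [Finset.sum_const, nsmul_eq_mul]
    _ ≤ m * c := mul_le_mul_of_nonneg_right hH0card hc
    _ = q := by rw [hcdef]; field_simp
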